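/- Let k be a commutative unital ring, N ≥ 1, and let G = ℤ^N be the free abelian group of rank N (written multiplicatively). For every d ∈ ℕ, the quotient ring k[G] / I_k(G)^{d+1} of the monoid algebra by the (d+1)-st power of the augmentation ideal is a free k-module of rank Σ_{j=0}^{d} C(N+j−1, j). -/

import Mathlib

open MvPolynomial Pointwise

set_option maxHeartbeats 1000000
set_option synthInstance.maxHeartbeats 2000000

noncomputable section Stmt14Aux

namespace Stmt14

/-! ### Degree lemmas for `Finsupp` -/

lemma degree_def {σ : Type*} (f : σ →₀ ℕ) : f.degree = f.sum fun _ n => n := rfl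

lemma degree_mono {σ : Type*} {f g : σ →₀ ℕ} (h : f ≤ g) : f.degree ≤ g.degree := by
  classical
  have hle : ∀ i, f i ≤ g i := fun i => Finsupp.le_def.mp h i
  have hsub : f.support ⊆ g.support := fun i hi => by
    rw [Finsupp.mem_support_iff] at hi ⊢
    exact fun hg => hi (Nat.le_zero.mp (hg ▸ hle i))
  calc f.degree = ∑ i ∈ f.support, f i := rfl
    _ ≤ ∑ i ∈ g.support, f i := Finset.sum_le_sum_of_subset hsub
    _ ≤ ∑ i ∈ g.support, g i := Finset.sum_le_sum fun i _ => hle i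

lemma degree_add {σ : Type*} (f g : σ →₀ ℕ) : (f + g).degree = f.degree + g.degree := by
  simp only [degree_def]
  exact Finsupp.sum_add_index' (fun _ => rfl) fun _ _ _ => rfl

lemma degree_single {σ : Type*} (i : σ) (n : ℕ) : (Finsupp.single i n).degree = n := by
  rw [degree_def]
  exact Finsupp.sum_single_index rfl

lemma degree_toFinsupp {α : Type*} [DecidableEq α] (m : Multiset α) :
    (Multiset.toFinsupp m).degree = Multiset.card m :=
  Multiset.toFinsupp_sum_eq m

lemma degree_toMultiset {α : Type*} (f : α →₀ ℕ) :
    Multiset.card (Finsupp.toMultiset f) = f.degree :=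
  Finsupp.card_toMultiset f

/-! ### The power of the ideal spanned by the variables -/

variable (k : Type*) [CommRing k] (N d : ℕ)

lemma X_mem_span (i : Fin N) :
    (X i : MvPolynomial (Fin N) k) ∈ Ideal.span (Set.range X) :=
  Ideal.subset_span ⟨i, rfl⟩

lemma monomial_mem_pow (s : Fin N →₀ ℕ) :
    (monomial s (1 : k)) ∈
      (Ideal.span (Set.range X) : Ideal (MvPolynomial (Fin N) k)) ^ s.degree := by
  have h1 : (monomial s (1 : k)) = ∏ i ∈ s.support, X i ^ s i := by
    rw [monomial_eq, C_1, one_mul]; rfl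
  have h2 : (Ideal.span (Set.range X) : Ideal (MvPolynomial (Fin N) k)) ^ s.degree
      = ∏ i ∈ s.support, (Ideal.span (Set.range X) : Ideal (MvPolynomial (Fin N) k)) ^ s i :=
    (Finset.prod_pow_eq_pow_sum _ _ _).symm
  rw [h1, h2]
  exact Ideal.prod_mem_prod fun i _ => Ideal.pow_mem_pow (X_mem_span k N i) _

lemma pow_le_span_monomial (n : ℕ) :
    (Ideal.span (Set.range X) : Ideal (MvPolynomial (Fin N) k)) ^ n ≤
      Ideal.span ((fun s : Fin N →₀ ℕ => monomial s (1 : k)) '' {s | n ≤ s.degree}) := by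
  induction n with
  | zero =>
    rw [pow_zero, Ideal.one_eq_top, top_le_iff, Ideal.eq_top_iff_one]
    exact Ideal.subset_span ⟨0, by simp [Set.mem_setOf_eq], by
      show (monomial (0 : Fin N →₀ ℕ)) (1 : k) = 1
      rw [monomial_zero', C_1]⟩
  | succ n ih =>
    rw [pow_succ]
    calc (Ideal.span (Set.range X) : Ideal (MvPolynomial (Fin N) k)) ^ n
          * Ideal.span (Set.range X)
        ≤ Ideal.span ((fun s : Fin N →₀ ℕ => monomial s (1 : k)) '' {s | n ≤ s.degree})
          * Ideal.span (Set.range X) := Ideal.mul_mono_left ih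
      _ = Ideal.span (((fun s : Fin N →₀ ℕ => monomial s (1 : k)) '' {s | n ≤ s.degree})
          * Set.range X) := Ideal.span_mul_span' _ _
      _ ≤ Ideal.span ((fun s : Fin N →₀ ℕ => monomial s (1 : k)) '' {s | n + 1 ≤ s.degree}) := by
          rw [Ideal.span_le]
          rintro z hz
          rw [Set.mem_mul] at hz
          obtain ⟨a, ⟨s, hs, rfl⟩, b, ⟨i, rfl⟩, rfl⟩ := hz
          refine Ideal.subset_span ⟨s + Finsupp.single i 1, ?_, ?_⟩
          · have h := degree_add s (Finsupp.single i 1)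
            simp only [Set.mem_setOf_eq] at hs ⊢
            rw [h, degree_single]
            omega
          · show monomial (s + Finsupp.single i 1) (1 : k) = monomial s 1 * X i
            rw [X, monomial_mul, mul_one]

lemma span_X_pow_eq (n : ℕ) :
    (Ideal.span (Set.range X) : Ideal (MvPolynomial (Fin N) k)) ^ n =
      Ideal.span ((fun s : Fin N →₀ ℕ => monomial s (1 : k)) '' {s | n ≤ s.degree}) := by
  refine le_antisymm (pow_le_span_monomial k N n) ?_
  rw [Ideal.span_le]
  rintro z ⟨s, hs, rfl⟩
  exact Ideal.pow_le_pow_right hs (monomial_mem_pow k N s)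

lemma mem_span_X_pow {n : ℕ} {x : MvPolynomial (Fin N) k} :
    x ∈ (Ideal.span (Set.range X) : Ideal (MvPolynomial (Fin N) k)) ^ n ↔
      ∀ s : Fin N →₀ ℕ, s.degree < n → coeff s x = 0 := by
  rw [span_X_pow_eq, mem_ideal_span_monomial_image]
  constructor
  · intro h s hs
    by_contra hc
    obtain ⟨si, hsi, hle⟩ := h s (mem_support_iff.mpr hc)
    exact absurd (le_trans hsi (degree_mono hle)) (by omega)
  · intro h xi hxi
    refine ⟨xi, ?_, le_rfl⟩
    by_contra hc
    exact (mem_support_iff.mp hxi) (h xi (by simpa using hc))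

/-! ### The linear map cutting off at degree `d` -/

def phi : MvPolynomial (Fin N) k →ₗ[k]
    (({s : Fin N →₀ ℕ | s.degree ≤ d} : Set (Fin N →₀ ℕ)) →₀ k) :=
  Finsupp.lsubtypeDomain (M := k) (R := k) {s : Fin N →₀ ℕ | s.degree ≤ d} ∘ₗ
    (AddMonoidAlgebra.coeffLinearEquiv (M := Fin N →₀ ℕ) (S := k) k).toLinearMap

lemma phi_apply (x : MvPolynomial (Fin N) k)
    (s : ({s : Fin N →₀ ℕ | s.degree ≤ d} : Set (Fin N →₀ ℕ))) :
    phi k N d x s = coeff s.1 x := rfl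

lemma phi_ker : LinearMap.ker (phi k N d) =
    Submodule.restrictScalars k
      ((Ideal.span (Set.range X) : Ideal (MvPolynomial (Fin N) k)) ^ (d + 1)) := by
  ext x
  rw [LinearMap.mem_ker, Submodule.restrictScalars_mem, mem_span_X_pow]
  constructor
  · intro h s hs
    have := DFunLike.congr_fun h (⟨s, by exact Nat.lt_succ_iff.mp hs⟩ :
      ({s : Fin N →₀ ℕ | s.degree ≤ d} : Set (Fin N →₀ ℕ)))
    simpa using (phi_apply k N d x _).symm.trans this
  · intro h
    ext ⟨s, hs⟩
    rw [phi_apply]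
    exact h s (Nat.lt_succ_of_le hs)

lemma phi_monomial (s : Fin N →₀ ℕ) (hs : s.degree ≤ d) (b : k) :
    phi k N d (monomial s b) = Finsupp.single ⟨s, hs⟩ b := by
  ext ⟨t, ht⟩
  rw [phi_apply, coeff_monomial, Finsupp.single_apply]
  simp [Subtype.ext_iff, eq_comm]

lemma phi_surj : Function.Surjective (phi k N d) := by
  intro y
  induction y using Finsupp.induction with
  | zero => exact ⟨0, map_zero _⟩
  | single_add a b f _ _ ih =>
    obtain ⟨p, hp⟩ := ih
    exact ⟨monomial a.1 b + p, by rw [map_add, hp, phi_monomial k N d a.1 a.2 b]⟩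

/-! ### Counting -/

def equivSigma : ({s : Fin N →₀ ℕ | s.degree ≤ d} : Set (Fin N →₀ ℕ)) ≃
    Σ j : Fin (d + 1), Sym (Fin N) j where
  toFun s := ⟨⟨s.1.degree, Nat.lt_succ_of_le s.2⟩,
    ⟨Finsupp.toMultiset s.1, degree_toMultiset s.1⟩⟩
  invFun x := ⟨Multiset.toFinsupp (x.2 : Multiset (Fin N)), by
    have : (Multiset.toFinsupp (x.2 : Multiset (Fin N))).degree = (x.1 : ℕ) := by
      rw [degree_toFinsupp]; exact x.2.2
    simp only [Set.mem_setOf_eq, this]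
    exact Nat.lt_succ_iff.mp x.1.isLt⟩
  left_inv s := Subtype.ext (by simp)
  right_inv x := by
    refine Sigma.subtype_ext (Fin.ext ?_) ?_
    · show (Multiset.toFinsupp (x.2 : Multiset (Fin N))).degree = (x.1 : ℕ)
      rw [degree_toFinsupp]; exact x.2.2
    · show Finsupp.toMultiset (Multiset.toFinsupp (x.2 : Multiset (Fin N)))
        = (x.2 : Multiset (Fin N))
      simp

instance : Fintype ({s : Fin N →₀ ℕ | s.degree ≤ d} : Set (Fin N →₀ ℕ)) :=
  Fintype.ofEquiv _ (equivSigma N d).symm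

lemma card_sigma :
    Fintype.card (Σ j : Fin (d + 1), Sym (Fin N) j)
      = ∑ j ∈ Finset.range (d + 1), (N + j - 1).choose j := by
  rw [Fintype.card_sigma]
  rw [← Fin.sum_univ_eq_sum_range (fun j => (N + j - 1).choose j) (d + 1)]
  exact Finset.sum_congr rfl fun j _ => by
    rw [Sym.card_sym_eq_choose, Fintype.card_fin]

def equivFinCount : ({s : Fin N →₀ ℕ | s.degree ≤ d} : Set (Fin N →₀ ℕ)) ≃
    Fin (∑ j ∈ Finset.range (d + 1), (N + j - 1).choose j) :=
  (equivSigma N d).trans (Fintype.equivFinOfCardEq (card_sigma N d))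

/-! ### The algebra equivalence -/

abbrev Gp := Multiplicative (Fin N → ℤ)

def Iaug : Ideal (MonoidAlgebra k (Gp N)) :=
  RingHom.ker (MonoidAlgebra.lift k k (Gp N) 1)

abbrev QA := MonoidAlgebra k (Gp N) ⧸ (Iaug k N) ^ (d + 1)

def Jx : Ideal (MvPolynomial (Fin N) k) := Ideal.span (Set.range X)

abbrev QP := MvPolynomial (Fin N) k ⧸ (Jx k N) ^ (d + 1)

lemma isUnit_one_add_Xbar (i : Fin N) :
    IsUnit ((1 : QP k N d) + Ideal.Quotient.mk _ (X i)) := by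
  refine IsNilpotent.isUnit_one_add ⟨d + 1, ?_⟩
  rw [← map_pow, Ideal.Quotient.eq_zero_iff_mem]
  exact Ideal.pow_mem_pow (X_mem_span k N i) _

def uX (i : Fin N) : (QP k N d)ˣ := (isUnit_one_add_Xbar k N d i).unit

lemma uX_val (i : Fin N) :
    (uX k N d i : QP k N d) = 1 + Ideal.Quotient.mk _ (X i) :=
  (isUnit_one_add_Xbar k N d i).unit_spec

def chi : Gp N →* (QP k N d)ˣ where
  toFun g := ∏ i, uX k N d i ^ (Multiplicative.toAdd g i)
  map_one' := by simp
  map_mul' g h := by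
    show (∏ i, uX k N d i ^ (Multiplicative.toAdd (g * h) i)) = _
    rw [← Finset.prod_mul_distrib]
    refine Finset.prod_congr rfl fun i _ => ?_
    rw [toAdd_mul, Pi.add_apply, zpow_add]

lemma chi_apply (g : Gp N) :
    chi k N d g = ∏ i, uX k N d i ^ (Multiplicative.toAdd g i) := rfl

def alpha : MonoidAlgebra k (Gp N) →ₐ[k] QP k N d :=
  MonoidAlgebra.lift k (QP k N d) (Gp N) ((Units.coeHom _).comp (chi k N d))

lemma alpha_of (g : Gp N) :
    alpha k N d (MonoidAlgebra.of k (Gp N) g) = (chi k N d g : QP k N d) := by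
  rw [alpha, MonoidAlgebra.lift_of]; rfl

def gee (i : Fin N) : Gp N := Multiplicative.ofAdd (Pi.single i (1 : ℤ))

lemma prod_gee (g : Gp N) :
    (∏ i, gee N i ^ (Multiplicative.toAdd g i)) = g := by
  refine Multiplicative.toAdd.injective ?_
  rw [toAdd_prod]
  funext j
  simp only [Finset.sum_apply, toAdd_zpow, gee, toAdd_ofAdd, Pi.smul_apply, smul_eq_mul]
  rw [Finset.sum_eq_single j]
  · rw [Pi.single_eq_same, mul_one]
  · intro b _ hb
    rw [Pi.single_eq_of_ne hb.symm, mul_zero]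
  · intro h
    exact absurd (Finset.mem_univ j) h

lemma chi_gee (i : Fin N) : chi k N d (gee N i) = uX k N d i := by
  rw [chi_apply]
  rw [Finset.prod_eq_single_of_mem i (Finset.mem_univ i)]
  · rw [gee, toAdd_ofAdd, Pi.single_eq_same, zpow_one]
  · intro j _ hj
    rw [gee, toAdd_ofAdd, Pi.single_eq_of_ne hj, zpow_zero]

/-- A general helper: if `f` maps `I` into `K` and `K ^ n = ⊥`, then `f` kills `I ^ n`. -/
lemma pow_le_ker {A B : Type*} [CommRing A] [CommRing B] (f : A →+* B) {I : Ideal A}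
    {K : Ideal B} (hle : I ≤ K.comap f) {n : ℕ} (hK : K ^ n = ⊥) :
    ∀ x ∈ I ^ n, f x = 0 := by
  intro x hx
  have hm : Ideal.map f (I ^ n) ≤ K ^ n := by
    rw [Ideal.map_pow]
    exact Ideal.pow_right_mono (Ideal.map_le_iff_le_comap.mpr hle) n
  have := hm (Ideal.mem_map_of_mem f hx)
  rwa [hK, Ideal.mem_bot] at this

lemma alpha_aug_mem {x : MonoidAlgebra k (Gp N)} (hx : x ∈ Iaug k N) :
    alpha k N d x ∈ (Jx k N).map (Ideal.Quotient.mk ((Jx k N) ^ (d + 1))) := by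
  let JQ := (Jx k N).map (Ideal.Quotient.mk ((Jx k N) ^ (d + 1)))
  show alpha k N d x ∈ JQ
  have hu : ∀ i, Units.map (Ideal.Quotient.mk JQ).toMonoidHom (uX k N d i) = 1 := by
    intro i
    refine Units.ext ?_
    show Ideal.Quotient.mk JQ ((uX k N d i : QP k N d)) = 1
    rw [uX_val, map_add, map_one]
    have hz : Ideal.Quotient.mk JQ (Ideal.Quotient.mk ((Jx k N) ^ (d + 1)) (X i)) = 0 :=
      Ideal.Quotient.eq_zero_iff_mem.mpr (Ideal.mem_map_of_mem _ (X_mem_span k N i))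
    rw [hz, add_zero]
  have key : (Ideal.Quotient.mkₐ k JQ).comp (alpha k N d)
      = ((Algebra.ofId k (QP k N d ⧸ JQ))).comp (MonoidAlgebra.lift k k (Gp N) 1) := by
    apply MonoidAlgebra.algHom_ext
    intro g
    rw [← MonoidAlgebra.of_apply]
    simp only [AlgHom.coe_comp, Function.comp_apply]
    rw [Ideal.Quotient.mkₐ_eq_mk, alpha_of, MonoidAlgebra.lift_of]
    have h1 : Ideal.Quotient.mk JQ ((chi k N d g : QP k N d))
        = ((Units.map (Ideal.Quotient.mk JQ).toMonoidHom (chi k N d g) : (QP k N d ⧸ JQ)ˣ)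
          : QP k N d ⧸ JQ) := rfl
    rw [h1]
    letI : CommGroup (QP k N d ⧸ JQ)ˣ := @Units.instCommGroupUnits (QP k N d ⧸ JQ) inferInstance
    have h2 : Units.map (Ideal.Quotient.mk JQ).toMonoidHom (chi k N d g) = 1 := by
      rw [chi_apply, map_prod]
      rw [Finset.prod_eq_one]
      intro i _
      rw [map_zpow, hu i, one_zpow]
    rw [h2]
    simp [Algebra.ofId_apply]
    exact Subsingleton.elim _ _
  have h3 := DFunLike.congr_fun key x
  simp only [AlgHom.coe_comp, Function.comp_apply, Ideal.Quotient.mkₐ_eq_mk] at h3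
  have hx0 : (MonoidAlgebra.lift k k (Gp N) 1) x = 0 := hx
  rw [hx0, map_zero] at h3
  exact Ideal.Quotient.eq_zero_iff_mem.mp h3

lemma alpha_pow_ker : ∀ x ∈ (Iaug k N) ^ (d + 1), alpha k N d x = 0 := by
  have hz : ((Jx k N).map (Ideal.Quotient.mk ((Jx k N) ^ (d + 1)))) ^ (d + 1) = ⊥ := by
    rw [← Ideal.map_pow, Ideal.map_quotient_self]
  exact pow_le_ker (alpha k N d).toRingHom
    (fun x hx => Ideal.mem_comap.mpr (alpha_aug_mem k N d hx)) hz

def alphaBar : QA k N d →ₐ[k] QP k N d :=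
  Ideal.Quotient.liftₐ _ (alpha k N d) (alpha_pow_ker k N d)

def beta : MvPolynomial (Fin N) k →ₐ[k] QA k N d :=
  MvPolynomial.aeval
    (fun i => Ideal.Quotient.mkₐ k ((Iaug k N) ^ (d + 1))
      (MonoidAlgebra.of k (Gp N) (gee N i) - 1))

lemma of_sub_one_mem (g : Gp N) :
    MonoidAlgebra.of k (Gp N) g - 1 ∈ Iaug k N := by
  have h1 : (MonoidAlgebra.lift k k (Gp N) 1) (MonoidAlgebra.of k (Gp N) g) = 1 := by
    rw [MonoidAlgebra.lift_of]; rfl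
  have h2 : (MonoidAlgebra.lift k k (Gp N) 1) (1 : MonoidAlgebra k (Gp N)) = 1 := map_one _
  have : (MonoidAlgebra.lift k k (Gp N) 1) (MonoidAlgebra.of k (Gp N) g - 1) = 0 := by
    rw [map_sub, h1, h2, sub_self]
  exact this

lemma beta_pow_ker : ∀ x ∈ (Jx k N) ^ (d + 1), beta k N d x = 0 := by
  have hz : ((Iaug k N).map (Ideal.Quotient.mk ((Iaug k N) ^ (d + 1)))) ^ (d + 1) = ⊥ := by
    rw [← Ideal.map_pow, Ideal.map_quotient_self]
  refine pow_le_ker (beta k N d).toRingHom ?_ hz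
  rw [Jx, Ideal.span_le]
  rintro y ⟨i, rfl⟩
  rw [SetLike.mem_coe, Ideal.mem_comap]
  show beta k N d (X i) ∈ _
  rw [beta, aeval_X, Ideal.Quotient.mkₐ_eq_mk]
  exact Ideal.mem_map_of_mem _ (of_sub_one_mem k N (gee N i))

def betaBar : QP k N d →ₐ[k] QA k N d :=
  Ideal.Quotient.liftₐ _ (beta k N d) (beta_pow_ker k N d)

lemma alphaBar_mk (x : MonoidAlgebra k (Gp N)) :
    alphaBar k N d (Ideal.Quotient.mk _ x) = alpha k N d x := by
  rw [alphaBar, Ideal.Quotient.liftₐ_apply]; rfl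

lemma betaBar_mk (x : MvPolynomial (Fin N) k) :
    betaBar k N d (Ideal.Quotient.mk _ x) = beta k N d x := by
  rw [betaBar, Ideal.Quotient.liftₐ_apply]; rfl

def omegaU : Gp N →* (QA k N d)ˣ :=
  ((Ideal.Quotient.mk ((Iaug k N) ^ (d + 1))).toMonoidHom.comp
    (MonoidAlgebra.of k (Gp N))).toHomUnits

lemma omegaU_val (g : Gp N) :
    (omegaU k N d g : QA k N d) = Ideal.Quotient.mk _ (MonoidAlgebra.of k (Gp N) g) :=
  rfl

lemma omegaU_prod (s : Finset (Fin N)) (f : Fin N → Gp N) :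
    (∏ i ∈ s, omegaU k N d (f i)) = omegaU k N d (∏ i ∈ s, f i) := by
  classical
  induction s using Finset.induction with
  | empty => simp
  | insert _ _ hnotmem ih =>
    rw [Finset.prod_insert hnotmem, Finset.prod_insert hnotmem, ih, map_mul]

lemma betaBar_uX (i : Fin N) :
    Units.map ((betaBar k N d : QP k N d →+* QA k N d)).toMonoidHom (uX k N d i)
      = omegaU k N d (gee N i) := by
  refine Units.ext ?_
  show betaBar k N d ((uX k N d i : QP k N d)) = (omegaU k N d (gee N i) : QA k N d)
  rw [uX_val, map_add, map_one, betaBar_mk, beta, aeval_X, Ideal.Quotient.mkₐ_eq_mk,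
    omegaU_val, map_sub, map_one]
  ring

lemma comp1 : (alphaBar k N d).comp (betaBar k N d) = AlgHom.id k (QP k N d) := by
  apply Ideal.Quotient.algHom_ext
  apply MvPolynomial.algHom_ext
  intro i
  simp only [AlgHom.coe_comp, Function.comp_apply, Ideal.Quotient.mkₐ_eq_mk, AlgHom.id_apply]
  rw [betaBar_mk, beta, aeval_X, Ideal.Quotient.mkₐ_eq_mk, alphaBar_mk, map_sub, map_one,
    alpha_of, chi_gee, uX_val]
  ring

lemma comp2 : (betaBar k N d).comp (alphaBar k N d) = AlgHom.id k (QA k N d) := by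
  apply Ideal.Quotient.algHom_ext
  apply MonoidAlgebra.algHom_ext
  intro g
  rw [← MonoidAlgebra.of_apply]
  simp only [AlgHom.coe_comp, Function.comp_apply, Ideal.Quotient.mkₐ_eq_mk, AlgHom.id_apply]
  rw [alphaBar_mk, alpha_of]
  have h1 : betaBar k N d ((chi k N d g : QP k N d))
      = ((Units.map ((betaBar k N d : QP k N d →+* QA k N d)).toMonoidHom (chi k N d g)
          : (QA k N d)ˣ) : QA k N d) := rfl
  rw [h1]
  have h2 : Units.map ((betaBar k N d : QP k N d →+* QA k N d)).toMonoidHom (chi k N d g)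
      = omegaU k N d g := by
    rw [chi_apply, map_prod]
    have h3 : ∀ i ∈ Finset.univ,
        Units.map ((betaBar k N d : QP k N d →+* QA k N d)).toMonoidHom
          (uX k N d i ^ (Multiplicative.toAdd g i))
        = omegaU k N d (gee N i ^ (Multiplicative.toAdd g i)) := by
      intro i _
      rw [map_zpow, betaBar_uX, ← map_zpow]
    rw [Finset.prod_congr rfl h3, omegaU_prod, prod_gee]
  rw [h2, omegaU_val]
  exact Subsingleton.elim _ _

def algEquivQ : QA k N d ≃ₐ[k] QP k N d :=
  AlgEquiv.ofAlgHom (alphaBar k N d) (betaBar k N d) (comp1 k N d) (comp2 k N d)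

/-! ### restrictScalars and powers -/

lemma restrictScalars_pow {A : Type*} [CommRing A] [Algebra k A] (I : Ideal A) :
    ∀ n : ℕ, (Submodule.restrictScalars k I) ^ (n + 1)
      = Submodule.restrictScalars k (I ^ (n + 1))
  | 0 => by rw [pow_one, pow_one]
  | n + 1 => by
    rw [pow_succ, restrictScalars_pow I n, pow_succ (I) (n + 1),
      ← Submodule.restrictScalars_mul]

end Stmt14

end Stmt14Aux

/-- The augmentation ideal of the monoid algebra `k[G]`, i.e. the kernel of the
`k`-algebra homomorphism `k[G] → k` sending each `g ∈ G` to `1`, regarded as a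
`k`-submodule of `k[G]`. -/
noncomputable def augIdeal (k : Type*) [CommRing k] (G : Type*) [Monoid G] :
    Submodule k (MonoidAlgebra k G) :=
  Submodule.restrictScalars k (RingHom.ker (MonoidAlgebra.lift k k G 1))

/-- The `d`-th power of the augmentation ideal of `k[G]` (with the usual ideal-theoretic
convention that the zeroth power is the whole ring). -/
noncomputable def augPow (k : Type*) [CommRing k] (G : Type*) [Monoid G] :
    ℕ → Submodule k (MonoidAlgebra k G)
  | 0 => ⊤
  | d + 1 => augIdeal k G ^ (d + 1)

/-- For `G = ℤ^N` (`N ≥ 1`, written multiplicatively) and every `d`,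
the quotient `k[G] / I_k(G)^{d+1}` is a free `k`-module of rank `∑_{j=0}^d C(N+j-1, j)`. -/
theorem stmt_14 {k : Type*} [CommRing k] (N d : ℕ) (hN : 1 ≤ N) :
    Nonempty (Module.Basis (Fin (∑ j ∈ Finset.range (d + 1), (N + j - 1).choose j)) k
      (MonoidAlgebra k (Multiplicative (Fin N → ℤ)) ⧸
        augPow k (Multiplicative (Fin N → ℤ)) (d + 1))) := by
  classical
  open Stmt14 in
  have hpow : augPow k (Stmt14.Gp N) (d + 1)
      = Submodule.restrictScalars k ((Stmt14.Iaug k N) ^ (d + 1)) := by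
    show augIdeal k (Stmt14.Gp N) ^ (d + 1) = _
    exact Stmt14.restrictScalars_pow k (Stmt14.Iaug k N) d
  let e1 : (MonoidAlgebra k (Stmt14.Gp N) ⧸ augPow k (Stmt14.Gp N) (d + 1)) ≃ₗ[k]
      (MonoidAlgebra k (Stmt14.Gp N) ⧸
        Submodule.restrictScalars k ((Stmt14.Iaug k N) ^ (d + 1))) :=
    Submodule.quotEquivOfEq _ _ hpow
  let e2 := Submodule.Quotient.restrictScalarsEquiv k ((Stmt14.Iaug k N) ^ (d + 1))
  let e3 : Stmt14.QA k N d ≃ₗ[k] Stmt14.QP k N d := (Stmt14.algEquivQ k N d).toLinearEquiv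
  let e4 := (Submodule.Quotient.restrictScalarsEquiv k ((Stmt14.Jx k N) ^ (d + 1))).symm
  let e5 : (MvPolynomial (Fin N) k ⧸
        Submodule.restrictScalars k ((Stmt14.Jx k N) ^ (d + 1))) ≃ₗ[k]
      (MvPolynomial (Fin N) k ⧸ LinearMap.ker (Stmt14.phi k N d)) :=
    Submodule.quotEquivOfEq _ _ (Stmt14.phi_ker k N d).symm
  let e6 := (Stmt14.phi k N d).quotKerEquivOfSurjective (Stmt14.phi_surj k N d)
  let eq := e1.trans (e2.trans (e3.trans (e4.trans (e5.trans e6))))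
  let b := (Finsupp.basisSingleOne
      (ι := ({s : Fin N →₀ ℕ | s.degree ≤ d} : Set (Fin N →₀ ℕ))) (R := k)).map eq.symm
  exact ⟨b.reindex (Stmt14.equivFinCount N d)⟩
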